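/- Let ℓ : ℝ → ℝ be nonnegative with ℓ and √ℓ continuously differentiable where needed, and let f : ℝ^p → ℝ be differentiable and positively homogeneous of degree α > 0. Define h(θ) = √(ℓ(f(θ))). Then for θ with f(θ) ≠ 0, ∫₀¹ ∇h(tθ) dt = ((√(ℓ(f(θ))) − √(ℓ(0))) / (α f(θ))) · ∇f(θ). -/

import Mathlib

open Real MeasureTheory intervalIntegral Set

private lemma toDual_symm_smul {p : ℕ} (c : ℝ) (L : StrongDual ℝ (EuclideanSpace ℝ (Fin p))) :
    (InnerProductSpace.toDual ℝ (EuclideanSpace ℝ (Fin p))).symm (c • L)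
      = c • (InnerProductSpace.toDual ℝ (EuclideanSpace ℝ (Fin p))).symm L := by
  rw [map_smulₛₗ]
  simp

private lemma grad_comp_scalar {p : ℕ} (f : EuclideanSpace ℝ (Fin p) → ℝ) (g : ℝ → ℝ) (c : ℝ)
    (w : EuclideanSpace ℝ (Fin p)) (hf : DifferentiableAt ℝ f w)
    (hg : HasDerivAt g c (f w)) :
    gradient (fun x => g (f x)) w = c • gradient f w := by
  have h1 : HasFDerivAt (fun x => g (f x)) (c • fderiv ℝ f w) w :=
    hg.comp_hasFDerivAt w hf.hasFDerivAt
  rw [h1.hasGradientAt.gradient]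
  exact toDual_symm_smul c (fderiv ℝ f w)

private lemma grad_homog {p : ℕ} (f : EuclideanSpace ℝ (Fin p) → ℝ) (α : ℝ)
    (hf : Differentiable ℝ f)
    (hhom : ∀ t : ℝ, 0 < t → ∀ θ, f (t • θ) = t ^ α * f θ)
    (t : ℝ) (ht : 0 < t) (θ : EuclideanSpace ℝ (Fin p)) :
    gradient f (t • θ) = t ^ (α - 1) • gradient f θ := by
  have h1 : HasFDerivAt (fun x => f (t • x)) (t • fderiv ℝ f (t • θ)) θ := by
    have h := (hf (t • θ)).hasFDerivAt.comp θ ((hasFDerivAt_id θ).const_smul t)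
    refine HasFDerivAt.congr_fderiv h ?_
    ext x
    simp
  have h2 : HasFDerivAt (fun x => f (t • x)) ((t ^ α) • fderiv ℝ f θ) θ := by
    have he : (fun x : EuclideanSpace ℝ (Fin p) => f (t • x)) = fun x => t ^ α * f x :=
      funext fun x => hhom t ht x
    rw [he]
    exact (hf θ).hasFDerivAt.const_mul (t ^ α)
  have heq : t • fderiv ℝ f (t • θ) = (t ^ α) • fderiv ℝ f θ := h1.unique h2
  have hX : fderiv ℝ f (t • θ) = (t ^ (α - 1)) • fderiv ℝ f θ := by
    have := congrArg (fun L => t⁻¹ • L) heq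
    simp only [smul_smul, inv_mul_cancel₀ ht.ne', one_smul] at this
    rw [this]
    congr 1
    rw [Real.rpow_sub ht, Real.rpow_one]
    field_simp
  rw [gradient, hX, toDual_symm_smul]
  rfl

theorem adjoint_sqrt_loss_homogeneous {p : ℕ} (ℓ : ℝ → ℝ)
    (f : EuclideanSpace ℝ (Fin p) → ℝ) (α : ℝ)
    (hℓ : ∀ t, 0 ≤ ℓ t) (hℓC : ContDiff ℝ 1 ℓ) (hf : Differentiable ℝ f) (hα : 0 < α)
    (hhom : ∀ t : ℝ, 0 < t → ∀ θ, f (t • θ) = t ^ α * f θ)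
    (θ : EuclideanSpace ℝ (Fin p)) (hθ : f θ ≠ 0)
    (hpos : ∀ t ∈ Set.Ioc (0:ℝ) 1, 0 < ℓ (f (t • θ)))
    (hint : IntervalIntegrable
      (fun t : ℝ => gradient (fun w => Real.sqrt (ℓ (f w))) (t • θ))
      MeasureTheory.volume 0 1) :
    ∫ t in (0:ℝ)..1, gradient (fun w => Real.sqrt (ℓ (f w))) (t • θ)
      = ((Real.sqrt (ℓ (f θ)) - Real.sqrt (ℓ 0)) / (α * f θ)) • gradient f θ := by
  set v := gradient f θ with hv
  set G : ℝ → EuclideanSpace ℝ (Fin p) :=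
    fun t => (Real.sqrt (ℓ (t ^ α * f θ)) / (α * f θ)) • v with hG
  have hℓdiff : Differentiable ℝ ℓ := hℓC.differentiable one_ne_zero
  -- continuity of G on [0,1]
  have hGcont : ContinuousOn G (Icc 0 1) := by
    refine ContinuousOn.smul (f := fun t => Real.sqrt (ℓ (t ^ α * f θ)) / (α * f θ)) (g := fun _ => v) ?_ continuousOn_const
    apply ContinuousOn.div_const
    apply Real.continuous_sqrt.comp_continuousOn
    apply hℓC.continuous.comp_continuousOn
    apply ContinuousOn.mul _ continuousOn_const
    intro t _
    exact (Real.continuousAt_rpow_const t α (Or.inr hα.le)).continuousWithinAt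
  -- derivative of G on (0,1)
  have hGderiv : ∀ t ∈ Ioo (0:ℝ) 1,
      HasDerivWithinAt G (gradient (fun w => Real.sqrt (ℓ (f w))) (t • θ)) (Ioi t) t := by
    intro t ht
    have ht0 : 0 < t := ht.1
    have hfeq : f (t • θ) = t ^ α * f θ := hhom t ht0 θ
    have hLpos : 0 < ℓ (t ^ α * f θ) := by rw [← hfeq]; exact hpos t ⟨ht0, ht.2.le⟩
    -- derivative of the scalar part
    have hu : HasDerivAt (fun s : ℝ => s ^ α * f θ) (α * t ^ (α - 1) * f θ) t :=
      (Real.hasDerivAt_rpow_const (Or.inl ht0.ne')).mul_const (f θ)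
    have hℓd : HasDerivAt ℓ (deriv ℓ (t ^ α * f θ)) (t ^ α * f θ) :=
      (hℓdiff (t ^ α * f θ)).hasDerivAt
    have hsq : HasDerivAt Real.sqrt (1 / (2 * Real.sqrt (ℓ (t ^ α * f θ))))
        (ℓ (t ^ α * f θ)) := Real.hasDerivAt_sqrt hLpos.ne'
    have hs : HasDerivAt (fun s : ℝ => Real.sqrt (ℓ (s ^ α * f θ)) / (α * f θ))
        ((1 / (2 * Real.sqrt (ℓ (t ^ α * f θ))) * (deriv ℓ (t ^ α * f θ) * (α * t ^ (α - 1) * f θ))) / (α * f θ)) t :=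
      ((hsq.comp t (hℓd.comp t hu)).div_const (α * f θ))
    have hGd : HasDerivAt G
        (((1 / (2 * Real.sqrt (ℓ (t ^ α * f θ))) * (deriv ℓ (t ^ α * f θ) * (α * t ^ (α - 1) * f θ))) / (α * f θ)) • v) t :=
      hs.smul_const v
    -- the gradient of the composed map at t • θ
    have hgrad : gradient (fun w => Real.sqrt (ℓ (f w))) (t • θ)
        = ((1 / (2 * Real.sqrt (ℓ (f (t • θ)))) * deriv ℓ (f (t • θ))) * t ^ (α - 1)) • v := by
      have hgc : HasDerivAt (fun y => Real.sqrt (ℓ y))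
          (1 / (2 * Real.sqrt (ℓ (f (t • θ)))) * deriv ℓ (f (t • θ))) (f (t • θ)) := by
        have := (Real.hasDerivAt_sqrt (x := ℓ (f (t • θ))) (hpos t ⟨ht0, ht.2.le⟩).ne').comp (f (t • θ)) (hℓdiff (f (t • θ))).hasDerivAt
        exact this
      rw [grad_comp_scalar f (fun y => Real.sqrt (ℓ y)) _ (t • θ) (hf (t • θ)) hgc,
        grad_homog f α hf hhom t ht0 θ, smul_smul]
    rw [hgrad]
    apply HasDerivAt.hasDerivWithinAt
    refine hGd.congr_deriv ?_
    congr 1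
    rw [hfeq]
    have hsqpos : 0 < Real.sqrt (ℓ (t ^ α * f θ)) := Real.sqrt_pos.mpr hLpos
    field_simp
  have key := integral_eq_sub_of_hasDeriv_right_of_le (by norm_num : (0:ℝ) ≤ 1) hGcont hGderiv hint
  rw [key, hG]
  simp only [Real.one_rpow, one_mul, Real.zero_rpow hα.ne', zero_mul]
  rw [← sub_smul, div_sub_div_same]
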